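/- Let k be a field of characteristic 2. The element x = ad in the subring A = k[ab, ad, cd] of R = k[a,b,c,d]/(ad - bc - 1) satisfies the monic polynomial x^2 - x - (ab)(cd) over the subring B = k[ab, cd], and this polynomial is separable (its derivative is the unit -1). -/

import Mathlib

open MvPolynomial

noncomputable section

/-- The polynomial ring `k[a,b,c,d]` (variables indexed by `Fin 4`). -/
abbrev P (k : Type*) [Field k] := MvPolynomial (Fin 4) k

/-- The ideal `(ad - bc - 1)`. -/
def sl2Rel (k : Type*) [Field k] : Ideal (P k) :=
  Ideal.span {X 0 * X 3 - X 1 * X 2 - 1}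

/-- `R = k[a,b,c,d]/(ad - bc - 1)`, the coordinate ring of `SL₂`. -/
abbrev R (k : Type*) [Field k] := P k ⧸ sl2Rel k

def va (k : Type*) [Field k] : R k := Ideal.Quotient.mk _ (X 0)
def vb (k : Type*) [Field k] : R k := Ideal.Quotient.mk _ (X 1)
def vc (k : Type*) [Field k] : R k := Ideal.Quotient.mk _ (X 2)
def vd (k : Type*) [Field k] : R k := Ideal.Quotient.mk _ (X 3)

set_option maxHeartbeats 1000000 in
set_option synthInstance.maxHeartbeats 400000 in
/-- The element `ad` satisfies the monic polynomial `x² - x - (ab)(cd)`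
with coefficients in the subring `B = k[ab, cd]`, and this polynomial is separable:
its derivative is a unit (namely `-1`). -/
theorem stmt3 (k : Type*) [Field k] [CharP k 2]
    (B : Subalgebra k (R k)) (hB : B = Algebra.adjoin k {va k * vb k, vc k * vd k})
    (hab : va k * vb k ∈ B) (hcd : vc k * vd k ∈ B) :
    letI f : Polynomial B :=
      Polynomial.X ^ 2 - Polynomial.X -
        Polynomial.C (⟨va k * vb k, hab⟩ * ⟨vc k * vd k, hcd⟩)
    f.Monic ∧ Polynomial.aeval (va k * vd k) f = 0 ∧ IsUnit f.derivative := by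
  set f : Polynomial B := Polynomial.X ^ 2 - Polynomial.X -
      Polynomial.C (⟨va k * vb k, hab⟩ * ⟨vc k * vd k, hcd⟩) with hf
  have hrel : va k * vd k - vb k * vc k - 1 = 0 := by
    rw [va, vb, vc, vd, ← map_one (Ideal.Quotient.mk (sl2Rel k)), ← map_mul, ← map_mul,
      ← map_sub, ← map_sub, Ideal.Quotient.eq_zero_iff_mem]
    exact Ideal.subset_span rfl
  have h2k : (2 : k) = 0 := by
    have := CharP.cast_eq_zero k 2
    simpa using this
  have h2 : (2 : B) = 0 := by
    calc (2 : B) = algebraMap k B (2 : k) := (map_ofNat _ 2).symm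
    _ = 0 := by rw [h2k, map_zero]
  refine ⟨?_, ?_, ?_⟩
  · have : (f : Polynomial B) = Polynomial.X ^ 2 +
        (-Polynomial.X - Polynomial.C (⟨va k * vb k, hab⟩ * ⟨vc k * vd k, hcd⟩)) := by
      ring
    rw [this]
    apply Polynomial.monic_X_pow_add
    have h1 : (-Polynomial.X : Polynomial B).degree ≤ 1 := by
      rw [Polynomial.degree_neg]; exact Polynomial.degree_X_le
    have hC : (Polynomial.C (⟨va k * vb k, hab⟩ * ⟨vc k * vd k, hcd⟩) :
        Polynomial B).degree ≤ 1 := le_trans Polynomial.degree_C_le (by norm_num)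
    exact lt_of_le_of_lt (le_trans (Polynomial.degree_sub_le _ _) (max_le h1 hC))
      (by norm_num)
  · simp only [hf, map_sub, map_pow, Polynomial.aeval_X, Polynomial.aeval_C]
    have : (algebraMap B (R k)) (⟨va k * vb k, hab⟩ * ⟨vc k * vd k, hcd⟩)
        = (va k * vb k) * (vc k * vd k) := rfl
    rw [this]
    linear_combination (va k * vd k) * hrel
  · have hd : Polynomial.derivative f = -1 := by
      rw [hf]
      have h11 : (1 + 1 : B) = 0 := by rw [one_add_one_eq_two, h2]
      have h11p : (1 + 1 : Polynomial B) = 0 := by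
        rw [one_add_one_eq_two, ← map_ofNat Polynomial.C 2, h2, map_zero]
      simp [Polynomial.derivative_X_pow, h2, h11, h11p]
    rw [hd]
    exact (IsUnit.neg (a := (1 : Polynomial B)) isUnit_one)
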